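/- Let p ≥ 1, and for i = 1,…,p let nᵢ ≥ 2 be integers and Eᵢ > 0 real numbers; set n = n₁ + ⋯ + n_p. For all α₁,…,α_p > 0 with ∏ᵢ αᵢ^{nᵢ} = 1, one has √(∑ᵢ Eᵢ²/αᵢ²) ≥ √n · ∏ᵢ (Eᵢ/√nᵢ)^{nᵢ/n}, with equality if and only if αᵢ = (Eᵢ/√nᵢ) · ∏ₖ (√nₖ/Eₖ)^{nₖ/n} for every i. -/

import Mathlib

open Real

theorem stmt_1 (p : ℕ) (hp : 1 ≤ p) (n : Fin p → ℕ) (E : Fin p → ℝ)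
    (hn : ∀ i, 2 ≤ n i) (hE : ∀ i, 0 < E i)
    (N : ℝ) (hN : N = ∑ i, (n i : ℝ))
    (α : Fin p → ℝ) (hα : ∀ i, 0 < α i)
    (hconstraint : ∏ i, α i ^ n i = 1) :
    Real.sqrt (∑ i, (E i) ^ 2 / (α i) ^ 2)
      ≥ Real.sqrt N * ∏ i, (E i / Real.sqrt (n i)) ^ ((n i : ℝ) / N) ∧
    (Real.sqrt (∑ i, (E i) ^ 2 / (α i) ^ 2)
      = Real.sqrt N * ∏ i, (E i / Real.sqrt (n i)) ^ ((n i : ℝ) / N)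
      ↔ ∀ i, α i = E i / Real.sqrt (n i) *
          ∏ k, (Real.sqrt (n k) / E k) ^ ((n k : ℝ) / N)) := by
  have hne : Nonempty (Fin p) := ⟨⟨0, hp⟩⟩
  have hni : ∀ i, (0 : ℝ) < n i := fun i => by
    have := hn i; positivity
  have hN0 : 0 < N := by
    rw [hN]
    exact Finset.sum_pos (fun i _ => hni i) Finset.univ_nonempty
  set w : Fin p → ℝ := fun i => (n i : ℝ) / N with hw_def
  have hw : ∀ i, 0 < w i := fun i => div_pos (hni i) hN0
  have hw1 : ∑ i, w i = 1 := by
    rw [hw_def, ← Finset.sum_div, ← hN, div_self hN0.ne']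
  set y : Fin p → ℝ := fun i => (E i / Real.sqrt (n i)) ^ 2 / (α i) ^ 2 with hy_def
  have hq : ∀ i, 0 < E i / Real.sqrt (n i) := fun i =>
    div_pos (hE i) (Real.sqrt_pos.mpr (hni i))
  have hy : ∀ i, 0 < y i := fun i => div_pos (pow_pos (hq i) 2) (pow_pos (hα i) 2)
  set S : ℝ := ∑ i, w i * y i with hS_def
  have hS0 : 0 < S := Finset.sum_pos (fun i _ => mul_pos (hw i) (hy i)) Finset.univ_nonempty
  -- sum identity
  have hsum : ∑ i, (E i) ^ 2 / (α i) ^ 2 = N * S := by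
    rw [hS_def, Finset.mul_sum]
    refine Finset.sum_congr rfl fun i _ => ?_
    have hs2 : Real.sqrt (n i) ^ 2 = (n i : ℝ) := Real.sq_sqrt (hni i).le
    have hs : Real.sqrt (n i) ≠ 0 := (Real.sqrt_pos.mpr (hni i)).ne'
    rw [hw_def, hy_def]
    simp only
    rw [div_pow, hs2]
    have hα' : α i ≠ 0 := (hα i).ne'
    have hN' : N ≠ 0 := hN0.ne'
    have hn' : ((n i : ℝ)) ≠ 0 := (hni i).ne'
    field_simp
  set c : ℝ := ∏ i, (E i / Real.sqrt (n i)) ^ ((n i : ℝ) / N) with hc_def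
  have hc0 : 0 < c :=
    Finset.prod_pos fun i _ => Real.rpow_pos_of_pos (hq i) _
  have hlogc : Real.log c = ∑ i, w i * Real.log (E i / Real.sqrt (n i)) := by
    rw [hc_def, Real.log_prod fun i _ => (Real.rpow_pos_of_pos (hq i) _).ne']
    refine Finset.sum_congr rfl fun i _ => ?_
    rw [Real.log_rpow (hq i)]
  have hlogα : ∑ i, w i * Real.log (α i) = 0 := by
    have h1 : ∑ i, (n i : ℝ) * Real.log (α i) = 0 := by
      have : ∑ i, (n i : ℝ) * Real.log (α i) = Real.log (∏ i, α i ^ n i) := by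
        rw [Real.log_prod fun i _ => (pow_pos (hα i) _).ne']
        exact Finset.sum_congr rfl fun i _ => (Real.log_pow _ _).symm
      rw [this, hconstraint, Real.log_one]
    have : ∑ i, w i * Real.log (α i) = (∑ i, (n i : ℝ) * Real.log (α i)) / N := by
      rw [Finset.sum_div]
      exact Finset.sum_congr rfl fun i _ => by rw [hw_def]; ring
    rw [this, h1, zero_div]
  have hlogy : ∀ i, Real.log (y i)
      = 2 * Real.log (E i / Real.sqrt (n i)) - 2 * Real.log (α i) := fun i => by
    rw [hy_def, Real.log_div (pow_pos (hq i) 2).ne' (pow_pos (hα i) 2).ne',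
      Real.log_pow, Real.log_pow]
    push_cast; ring
  have hkey : ∑ i, w i * Real.log (y i) = 2 * Real.log c := by
    calc ∑ i, w i * Real.log (y i)
        = ∑ i, (2 * (w i * Real.log (E i / Real.sqrt (n i))) - 2 * (w i * Real.log (α i))) :=
          Finset.sum_congr rfl fun i _ => by rw [hlogy i]; ring
      _ = 2 * (∑ i, w i * Real.log (E i / Real.sqrt (n i)))
            - 2 * (∑ i, w i * Real.log (α i)) := by
          rw [Finset.sum_sub_distrib, Finset.mul_sum, Finset.mul_sum]
      _ = 2 * Real.log c := by rw [← hlogc, hlogα]; ring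
  have hmem : ∀ i ∈ Finset.univ, y i ∈ Set.Ioi (0 : ℝ) := fun i _ => hy i
  have hSsmul : ∑ i, w i • y i = S := by simp [hS_def, smul_eq_mul]
  -- Jensen inequality
  have hle : ∑ i, w i * Real.log (y i) ≤ Real.log S := by
    have := (strictConcaveOn_log_Ioi.concaveOn).le_map_sum
      (t := Finset.univ) (w := w) (p := y) (fun i _ => (hw i).le) hw1 hmem
    simpa [smul_eq_mul, hSsmul] using this
  have hc2S : c ^ 2 ≤ S := by
    have h2 : Real.log (c ^ 2) ≤ Real.log S := by
      rw [Real.log_pow]; push_cast; rw [← hkey] at *; exact hle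
    exact (Real.log_le_log_iff (pow_pos hc0 2) hS0).mp h2
  have hNc2 : Real.sqrt (N * c ^ 2) = Real.sqrt N * c := by
    rw [Real.sqrt_mul hN0.le, Real.sqrt_sq hc0.le]
  have hineq : Real.sqrt (∑ i, (E i) ^ 2 / (α i) ^ 2)
      ≥ Real.sqrt N * ∏ i, (E i / Real.sqrt (n i)) ^ ((n i : ℝ) / N) := by
    rw [hsum, ← hNc2]
    exact Real.sqrt_le_sqrt (by nlinarith)
  refine ⟨hineq, ?_⟩
  -- the product of inverses
  have hd : ∏ k, (Real.sqrt (n k) / E k) ^ ((n k : ℝ) / N) = c⁻¹ := by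
    rw [hc_def, ← Finset.prod_inv_distrib]
    refine Finset.prod_congr rfl fun k _ => ?_
    rw [← Real.inv_rpow (hq k).le, inv_div]
  constructor
  · intro h
    rw [hsum, ← hNc2] at h
    have hNS : N * S = N * c ^ 2 :=
      (Real.sqrt_inj (by positivity) (by positivity)).mp h
    have hSc : S = c ^ 2 := by
      exact mul_left_cancel₀ hN0.ne' hNS
    have heq : Real.log (∑ i, w i • y i) = ∑ i, w i • Real.log (y i) := by
      have h1 : ∑ i, w i • Real.log (y i) = 2 * Real.log c := by
        simpa only [smul_eq_mul] using hkey
      rw [hSsmul, hSc, h1, Real.log_pow]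
      norm_num
    have hall := (strictConcaveOn_log_Ioi.map_sum_eq_iff
      (t := Finset.univ) (w := w) (p := y) (fun i _ => hw i) hw1 hmem).mp heq
    intro i
    have hyi : y i = c ^ 2 := by
      have h0 := hall i (Finset.mem_univ i)
      rwa [hSsmul, hSc] at h0
    rw [hd]
    have h2 : (E i / Real.sqrt (n i)) ^ 2 = (α i * c) ^ 2 := by
      rw [hy_def] at hyi
      simp only at hyi
      rw [div_eq_iff (pow_pos (hα i) 2).ne'] at hyi
      rw [hyi, mul_pow]; ring
    have h3 : E i / Real.sqrt (n i) = α i * c :=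
      (pow_left_inj₀ (hq i).le (mul_pos (hα i) hc0).le two_ne_zero).mp h2
    rw [h3, mul_assoc, mul_inv_cancel₀ hc0.ne', mul_one]
  · intro h
    have hterm : ∀ i, (E i) ^ 2 / (α i) ^ 2 = (n i : ℝ) * c ^ 2 := fun i => by
      have hs2 : Real.sqrt (n i) ^ 2 = (n i : ℝ) := Real.sq_sqrt (hni i).le
      have hs : Real.sqrt (n i) ≠ 0 := (Real.sqrt_pos.mpr (hni i)).ne'
      rw [h i, hd]
      field_simp
      rw [hs2, mul_div_cancel_left₀ _ (hE i).ne']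
    rw [Finset.sum_congr rfl fun i _ => hterm i, ← Finset.sum_mul, ← hN, hNc2]
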